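/- For the KMP failure function, any k < s such that P[1..k] is a suffix of P[1..s] is obtained by iterating fail from s: the set {k < s : P[1..k] is a suffix of P[1..s]} equals {fail(s), fail(fail(s)), …, 0}. -/
import Mathlib


/-- The KMP failure function: `kmpFail P s` is the largest `k < s` such that
`P.take k` is a suffix of `P.take s` (the length of the longest border of
`P[1..s]`). -/
def kmpFail {α : Type*} [DecidableEq α] (P : List α) (s : ℕ) : ℕ :=
  Nat.findGreatest (fun k => (P.take k) <:+ (P.take s)) (s - 1)

lemma suffix_of_suffix_length_le' {α : Type*} {l1 l2 l : List α}
    (h1 : l1 <:+ l) (h2 : l2 <:+ l) (h : l1.length ≤ l2.length) : l1 <:+ l2 := by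
  rw [← List.reverse_prefix] at h1 h2 ⊢
  exact List.prefix_of_prefix_length_le h1 h2 (by simpa using h)

lemma kmpFail_lt {α : Type*} [DecidableEq α] (P : List α) {s : ℕ} (h1 : 1 ≤ s) :
    kmpFail P s < s :=
  lt_of_le_of_lt (Nat.findGreatest_le _) (by omega)

lemma kmpFail_suffix {α : Type*} [DecidableEq α] (P : List α) (s : ℕ) :
    P.take (kmpFail P s) <:+ P.take s := by
  unfold kmpFail
  exact Nat.findGreatest_spec (P := fun k => P.take k <:+ P.take s) (m := 0) (Nat.zero_le _) (by simp)

lemma le_kmpFail {α : Type*} [DecidableEq α] (P : List α) {s k : ℕ}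
    (hk : k < s) (hsuf : P.take k <:+ P.take s) : k ≤ kmpFail P s :=
  Nat.le_findGreatest (by omega) hsuf

/-- iterates are borders -/
lemma kmpFail_iterate_border {α : Type*} [DecidableEq α] (P : List α) {s : ℕ}
    (h1 : 1 ≤ s) (_h2 : s ≤ P.length) :
    ∀ j, 0 < j → (kmpFail P)^[j] s < s ∧ P.take ((kmpFail P)^[j] s) <:+ P.take s := by
  intro j hj
  induction j with
  | zero => omega
  | succ j ih =>
    rcases Nat.eq_zero_or_pos j with rfl | hj'
    · simpa using ⟨kmpFail_lt P h1, kmpFail_suffix P s⟩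
    · obtain ⟨hlt, hsuf⟩ := ih hj'
      set t := (kmpFail P)^[j] s with ht
      rw [Function.iterate_succ_apply', ← ht]
      rcases Nat.eq_zero_or_pos t with h0 | hpos
      · rw [h0]
        have : kmpFail P 0 = 0 := by simp [kmpFail]
        rw [this]
        exact ⟨h1, by simp⟩
      · refine ⟨lt_trans (kmpFail_lt P hpos) hlt, ?_⟩
        exact (kmpFail_suffix P t).trans hsuf

lemma kmp_forward {α : Type*} [DecidableEq α] (P : List α) :
    ∀ s, 1 ≤ s → s ≤ P.length → ∀ k, k < s → P.take k <:+ P.take s →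
      ∃ j, 0 < j ∧ (kmpFail P)^[j] s = k := by
  intro s
  induction s using Nat.strong_induction_on with
  | _ s ih =>
    intro h1 h2 k hk hsuf
    have hle : k ≤ kmpFail P s := le_kmpFail P hk hsuf
    rcases eq_or_lt_of_le hle with heq | hlt
    · exact ⟨1, one_pos, by simp [heq]⟩
    · -- k < kmpFail P s, so kmpFail P s ≥ 1
      have hf1 : 1 ≤ kmpFail P s := by omega
      have hfs : kmpFail P s < s := kmpFail_lt P h1
      have hfl : kmpFail P s ≤ P.length := by omega
      -- P.take k is a suffix of P.take (kmpFail P s)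
      have hsuf' : P.take k <:+ P.take (kmpFail P s) := by
        refine suffix_of_suffix_length_le' hsuf (kmpFail_suffix P s) ?_
        simp only [List.length_take]
        omega
      obtain ⟨j, hj, hjk⟩ := ih (kmpFail P s) hfs hf1 hfl k hlt hsuf'
      refine ⟨j + 1, by omega, ?_⟩
      rw [Function.iterate_add_apply, Function.iterate_one, hjk]

/-- Border characterization: the set `{k < s : P[1..k] is a suffix of P[1..s]}`
is exactly the set of iterates `{fail(s), fail(fail(s)), …, 0}` of the failure
function applied to `s`. -/
theorem kmp_borders_eq_fail_iterates {α : Type*} [DecidableEq α] (P : List α)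
    (s : ℕ) (h1 : 1 ≤ s) (h2 : s ≤ P.length) :
    ∀ k : ℕ, (k < s ∧ (P.take k) <:+ (P.take s)) ↔
      ∃ j, 0 < j ∧ (kmpFail P)^[j] s = k := by
  intro k
  constructor
  · rintro ⟨hk, hsuf⟩
    exact kmp_forward P s h1 h2 k hk hsuf
  · rintro ⟨j, hj, rfl⟩
    exact kmpFail_iterate_border P h1 h2 j hj
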